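/- Let T be a one-dimensional subspace of a finite-dimensional hermitian vector space E, and let W be a k-dimensional subspace with W ∩ T = 0. Then the minimum over all k-dimensional subspaces W' with W' ∩ T ≠ 0 of the projection distance d_p(W, W') equals sin ∠_min(W, T). -/

import Mathlib

open Module
open scoped InnerProductSpace

noncomputable section

variable {n : ℕ}

/-- The orthogonal projection onto a subspace, as an endomorphism. -/
noncomputable def proj (V : Submodule ℂ (EuclideanSpace ℂ (Fin n))) :
    EuclideanSpace ℂ (Fin n) →L[ℂ] EuclideanSpace ℂ (Fin n) :=
  V.subtypeL.comp V.orthogonalProjection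

/-- The projection distance between two subspaces. -/
noncomputable def dp (V1 V2 : Submodule ℂ (EuclideanSpace ℂ (Fin n))) : ℝ :=
  ‖proj V1 - proj V2‖

/-- The minimum angle between two subspaces. -/
noncomputable def minAngle (V1 V2 : Submodule ℂ (EuclideanSpace ℂ (Fin n))) : ℝ :=
  sInf {θ | ∃ v1 ∈ V1, v1 ≠ 0 ∧ ∃ v2 ∈ V2, v2 ≠ 0 ∧
    θ = Real.arccos (‖(inner ℂ v1 v2 : ℂ)‖ / (‖v1‖ * ‖v2‖))}


/-- Pythagoras for two orthonormal vectors with complex coefficients. -/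
lemma aux_pyth {F : Type*} [NormedAddCommGroup F] [InnerProductSpace ℂ F]
    {a e : F} (ha : ‖a‖ = 1) (he : ‖e‖ = 1) (hae : ⟪a, e⟫_ℂ = 0) (α β : ℂ) :
    ‖α • a + β • e‖ ^ 2 = ‖α‖ ^ 2 + ‖β‖ ^ 2 := by
  rw [@norm_add_sq ℂ]
  simp [inner_smul_left, inner_smul_right, hae, norm_smul, ha, he]

/-- A scalar identity for a rotation acting on pairs of complex numbers. -/
lemma aux_scalar (s c : ℝ) (h : s ^ 2 + c ^ 2 = 1) (α η : ℂ) :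
    ‖(s : ℂ) * α - (c : ℂ) * η‖ ^ 2 + ‖(c : ℂ) * α + (s : ℂ) * η‖ ^ 2
      = ‖α‖ ^ 2 + ‖η‖ ^ 2 := by
  simp only [Complex.sq_norm]
  simp only [Complex.normSq_apply, Complex.sub_re, Complex.sub_im, Complex.add_re,
    Complex.add_im, Complex.mul_re, Complex.mul_im, Complex.ofReal_re, Complex.ofReal_im]
  ring_nf
  nlinarith [h]

/-- Bessel's inequality for two orthonormal vectors. -/
lemma aux_bessel2 {F : Type*} [NormedAddCommGroup F] [InnerProductSpace ℂ F]
    {a e : F} (ha : ‖a‖ = 1) (he : ‖e‖ = 1) (hae : ⟪a, e⟫_ℂ = 0) (x : F) :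
    ‖⟪a, x⟫_ℂ‖ ^ 2 + ‖⟪e, x⟫_ℂ‖ ^ 2 ≤ ‖x‖ ^ 2 := by
  have horth : Orthonormal ℂ (![a, e]) := by
    constructor
    · intro i; fin_cases i <;> simpa using ‹_›
    · intro i j hij
      fin_cases i <;> fin_cases j <;> simp_all [inner_eq_zero_symm.1 hae]
  have := horth.sum_inner_products_le (s := Finset.univ) x
  simpa [Fin.sum_univ_two] using this

/-- Key bound: the difference of rank-one projections onto unit vectors `w`, `t`
with real inner product `c` has pointwise norm bounded by `√(1-c²)`. -/
lemma aux_key_bound {F : Type*} [NormedAddCommGroup F] [InnerProductSpace ℂ F]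
    {w t : F} (hw : ‖w‖ = 1) (ht : ‖t‖ = 1) {c : ℝ} (hc0 : 0 ≤ c) (hc1 : c < 1)
    (hwt : ⟪w, t⟫_ℂ = (c : ℂ)) (x : F) :
    ‖⟪w, x⟫_ℂ • w - ⟪t, x⟫_ℂ • t‖ ≤ Real.sqrt (1 - c ^ 2) * ‖x‖ := by
  set s : ℝ := Real.sqrt (1 - c ^ 2) with hs
  have hs2 : s ^ 2 = 1 - c ^ 2 := Real.sq_sqrt (by nlinarith)
  have hspos : 0 < s := Real.sqrt_pos.2 (by nlinarith)
  have hsne : (s : ℂ) ≠ 0 := by exact_mod_cast hspos.ne'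
  set e : F := (s : ℂ)⁻¹ • (t - (c : ℂ) • w) with he_def
  have htw : ⟪t, w⟫_ℂ = (c : ℂ) := by
    rw [← inner_conj_symm, hwt]; simp
  have hww : ⟪w, w⟫_ℂ = 1 := by
    rw [inner_self_eq_norm_sq_to_K, hw]; norm_num
  have htt : ⟪t, t⟫_ℂ = 1 := by
    rw [inner_self_eq_norm_sq_to_K, ht]; norm_num
  have hnorm_tc : ‖t - (c : ℂ) • w‖ = s := by
    have h2 : ‖t - (c : ℂ) • w‖ ^ 2 = s ^ 2 := by
      rw [@norm_sub_sq ℂ, inner_smul_right, htw, hs2]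
      rw [norm_smul, hw, ht]
      have : ((c : ℂ) * (c : ℂ)).re = c * c := by
        rw [← Complex.ofReal_mul, Complex.ofReal_re]
      rw [RCLike.re_to_complex] at *
      rw [this]
      have : ‖(c : ℂ)‖ = c := by
        rw [Complex.norm_real, Real.norm_eq_abs, abs_of_nonneg hc0]
      rw [this]
      ring
    nlinarith [norm_nonneg (t - (c : ℂ) • w), hspos]
  have he : ‖e‖ = 1 := by
    rw [he_def, norm_smul, hnorm_tc]
    simp [hspos.ne', abs_of_pos hspos]
  have hwe : ⟪w, e⟫_ℂ = 0 := by
    rw [he_def, inner_smul_right, inner_sub_right, inner_smul_right, hwt, hww]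
    ring
  have hte : t = (c : ℂ) • w + (s : ℂ) • e := by
    rw [he_def, smul_smul, mul_inv_cancel₀ hsne, one_smul]
    abel
  set α : ℂ := ⟪w, x⟫_ℂ with hα
  set η : ℂ := ⟪e, x⟫_ℂ with hη
  have hβ : ⟪t, x⟫_ℂ = (c : ℂ) * α + (s : ℂ) * η := by
    rw [hte, inner_add_left, inner_smul_left, inner_smul_left]
    simp [hα, hη]
  have hcs : (s : ℂ) ^ 2 + (c : ℂ) ^ 2 = 1 := by
    have h' : s ^ 2 + c ^ 2 = 1 := by rw [hs2]; ring
    exact_mod_cast congrArg (Complex.ofReal) h'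
  have hvec : ⟪w, x⟫_ℂ • w - ⟪t, x⟫_ℂ • t
      = ((s : ℂ) * ((s : ℂ) * α - (c : ℂ) * η)) • w
        + (-((s : ℂ) * ((c : ℂ) * α + (s : ℂ) * η))) • e := by
    rw [hβ, hte]
    match_scalars
    · linear_combination α * hcs.symm
    · ring
  have h1 : ‖⟪w, x⟫_ℂ • w - ⟪t, x⟫_ℂ • t‖ ^ 2 ≤ (s * ‖x‖) ^ 2 := by
    rw [hvec, aux_pyth hw he hwe]
    have hb := aux_bessel2 hw he hwe x
    rw [← hα, ← hη] at hb
    have hsc := aux_scalar s c (by rw [hs2]; ring) α η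
    have e1 : ‖(s:ℂ) * ((s:ℂ)*α - (c:ℂ)*η)‖^2 = s^2 * ‖(s:ℂ)*α - (c:ℂ)*η‖^2 := by
      rw [norm_mul, Complex.norm_real, Real.norm_eq_abs, abs_of_pos hspos, mul_pow]
    have e2 : ‖-((s:ℂ) * ((c:ℂ)*α + (s:ℂ)*η))‖^2 = s^2 * ‖(c:ℂ)*α + (s:ℂ)*η‖^2 := by
      rw [norm_neg, norm_mul, Complex.norm_real, Real.norm_eq_abs, abs_of_pos hspos, mul_pow]
    rw [e1, e2]
    nlinarith [hsc, hb, sq_nonneg s]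
  nlinarith [norm_nonneg (⟪w, x⟫_ℂ • w - ⟪t, x⟫_ℂ • t),
    mul_nonneg hspos.le (norm_nonneg x)]

/-- Orthogonal projection onto `U ⊔ ℂ ∙ a` for `a` a unit vector orthogonal to `U`. -/
lemma aux_proj_sup {F : Type*} [NormedAddCommGroup F] [InnerProductSpace ℂ F]
    [FiniteDimensional ℂ F] {U : Submodule ℂ F} {a : F} (ha : ‖a‖ = 1)
    (haU : U ≤ (ℂ ∙ a)ᗮ) (x : F) :
    (Submodule.orthogonalProjection (U ⊔ ℂ ∙ a) x : F)
      = (Submodule.orthogonalProjection U x : F) + ⟪a, x⟫_ℂ • a := by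
  have haa : ⟪a, a⟫_ℂ = 1 := by
    rw [inner_self_eq_norm_sq_to_K, ha]; norm_num
  refine Submodule.eq_starProjection_of_mem_of_inner_eq_zero (u := x) ?_ ?_
  · exact Submodule.add_mem _ (Submodule.mem_sup_left (Submodule.orthogonalProjection U x).2)
      (Submodule.mem_sup_right (Submodule.smul_mem _ _ (Submodule.mem_span_singleton_self a)))
  · intro y hy
    rcases Submodule.mem_sup.1 hy with ⟨u, hu, z, hz, rfl⟩
    rcases Submodule.mem_span_singleton.1 hz with ⟨d, rfl⟩
    have h1 : ⟪a, u⟫_ℂ = 0 :=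
      (Submodule.mem_orthogonal _ _).1 (haU hu) a (Submodule.mem_span_singleton_self a)
    have h2 : ⟪a, ((Submodule.orthogonalProjection U x : F))⟫_ℂ = 0 :=
      (Submodule.mem_orthogonal _ _).1 (haU (Submodule.orthogonalProjection U x).2) a
        (Submodule.mem_span_singleton_self a)
    have h2' : ⟪((Submodule.orthogonalProjection U x : F)), a⟫_ℂ = 0 := by
      rw [← inner_conj_symm, h2]; simp
    have h3 : ⟪x - Submodule.orthogonalProjection U x, u⟫_ℂ = 0 :=
      Submodule.starProjection_inner_eq_zero x u hu
    have h4 : ⟪x, a⟫_ℂ = (starRingEnd ℂ) ⟪a, x⟫_ℂ := (inner_conj_symm x a).symm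
    rw [inner_sub_left] at h3
    simp only [inner_sub_left, inner_add_left, inner_add_right, inner_smul_left,
      inner_smul_right, h1, h2', haa, h4, h2']
    ring_nf
    linear_combination h3

/-- `arccos` is antitone. -/
lemma aux_arccos_le_arccos {x y : ℝ} (h : x ≤ y) : Real.arccos y ≤ Real.arccos x := by
  rw [Real.arccos_eq_pi_div_two_sub_arcsin, Real.arccos_eq_pi_div_two_sub_arcsin]
  have := Real.monotone_arcsin h
  linarith

lemma aux_minAngle {W T : Submodule ℂ (EuclideanSpace ℂ (Fin n))}
    {t : EuclideanSpace ℂ (Fin n)} (ht : ‖t‖ = 1) (hTt : T = ℂ ∙ t) (hWbot : W ≠ ⊥) :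
    minAngle W T
      = Real.arccos ‖(Submodule.orthogonalProjection W t : EuclideanSpace ℂ (Fin n))‖ := by
  set p : EuclideanSpace ℂ (Fin n) := (Submodule.orthogonalProjection W t : EuclideanSpace ℂ (Fin n))
    with hp
  set c : ℝ := ‖p‖ with hc
  have htne : t ≠ 0 := by
    intro h; rw [h, norm_zero] at ht; norm_num at ht
  have htT : t ∈ T := by rw [hTt]; exact Submodule.mem_span_singleton_self t
  have hpW : p ∈ W := (Submodule.orthogonalProjection W t).2
  have horth : t - p ∈ Wᗮ := Submodule.sub_starProjection_mem_orthogonal (K := W) t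
  have hinner : ∀ v ∈ W, ⟪v, t⟫_ℂ = ⟪v, p⟫_ℂ := by
    intro v hv
    have h0 : ⟪v, t - p⟫_ℂ = 0 := (Submodule.mem_orthogonal W _).1 horth v hv
    rw [inner_sub_right] at h0
    exact sub_eq_zero.1 h0
  have hratio_le : ∀ v ∈ W, v ≠ 0 → ‖⟪v, t⟫_ℂ‖ / ‖v‖ ≤ c := by
    intro v hv hvne
    rw [hinner v hv, div_le_iff₀ (norm_pos_iff.2 hvne)]
    calc ‖⟪v, p⟫_ℂ‖ ≤ ‖v‖ * ‖p‖ := norm_inner_le_norm v p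
    _ = c * ‖v‖ := by rw [hc]; ring
  have hleast : IsLeast {θ | ∃ v1 ∈ W, v1 ≠ 0 ∧ ∃ v2 ∈ T, v2 ≠ 0 ∧
      θ = Real.arccos (‖(inner ℂ v1 v2 : ℂ)‖ / (‖v1‖ * ‖v2‖))} (Real.arccos c) := by
    constructor
    · rcases eq_or_ne p 0 with hp0 | hp0
      · obtain ⟨v, hvW, hvne⟩ := Submodule.exists_mem_ne_zero_of_ne_bot hWbot
        refine ⟨v, hvW, hvne, t, htT, htne, ?_⟩
        have h0 : ⟪v, t⟫_ℂ = 0 := by rw [hinner v hvW, hp0, inner_zero_right]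
        rw [h0]
        simp [hc, hp0]
      · refine ⟨p, hpW, hp0, t, htT, htne, ?_⟩
        have hpt : ⟪p, t⟫_ℂ = ((‖p‖ : ℂ)) ^ 2 := by
          rw [hinner p hpW, inner_self_eq_norm_sq_to_K]
          rfl
        rw [hpt]
        have hcpos : 0 < c := norm_pos_iff.2 hp0
        congr 1
        rw [ht, mul_one]
        have : ‖((‖p‖ : ℂ)) ^ 2‖ = ‖p‖ ^ 2 := by
          rw [norm_pow, Complex.norm_real, Real.norm_eq_abs, abs_of_nonneg (norm_nonneg p)]
        rw [this, ← hc]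
        field_simp
    · rintro θ ⟨v1, hv1, hv1ne, v2, hv2, hv2ne, rfl⟩
      rw [hTt] at hv2
      rcases Submodule.mem_span_singleton.1 hv2 with ⟨d, rfl⟩
      have hd : d ≠ 0 := by rintro rfl; simp at hv2ne
      have hdpos : 0 < ‖d‖ := norm_pos_iff.2 hd
      apply aux_arccos_le_arccos
      rw [inner_smul_right, norm_mul, norm_smul, ht, mul_one]
      rw [mul_comm ‖v1‖ ‖d‖, mul_div_mul_left _ _ (ne_of_gt hdpos)]
      exact hratio_le v1 hv1 hv1ne
  rw [minAngle, hleast.csInf_eq]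



/-- for a line `T` and a `k`-dimensional subspace `W` with `W ∩ T = 0`,
the minimum of `d_p(W, W')` over the `k`-dimensional subspaces `W'` with `W' ∩ T ≠ 0`
equals `sin ∠_min(W, T)`. -/
theorem dist_to_schubert_eq_sin_minAngle
    (k : ℕ) (hk : 1 ≤ k) (T W : Submodule ℂ (EuclideanSpace ℂ (Fin n)))
    (hT : finrank ℂ T = 1) (hW : finrank ℂ W = k) (hWT : W ⊓ T = ⊥) :
    IsLeast {d | ∃ W' : Submodule ℂ (EuclideanSpace ℂ (Fin n)),
        finrank ℂ W' = k ∧ W' ⊓ T ≠ ⊥ ∧ d = dp W W'}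
      (Real.sin (minAngle W T)) := by
  classical
  have hTbot : T ≠ ⊥ := by intro h; rw [h, finrank_bot] at hT; omega
  have hex : ∃ t : EuclideanSpace ℂ (Fin n), ‖t‖ = 1 ∧ T = ℂ ∙ t := by
    obtain ⟨t₀, ht₀T, ht₀ne⟩ := Submodule.exists_mem_ne_zero_of_ne_bot hTbot
    have ht : ‖(‖t₀‖ : ℂ)⁻¹ • t₀‖ = 1 := by
      rw [norm_smul, norm_inv, Complex.norm_real, Real.norm_eq_abs,
        abs_of_nonneg (norm_nonneg t₀), inv_mul_cancel₀ (norm_ne_zero_iff.2 ht₀ne)]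
    refine ⟨(‖t₀‖ : ℂ)⁻¹ • t₀, ht, ?_⟩
    have htne0 : (‖t₀‖ : ℂ)⁻¹ • t₀ ≠ 0 := by
      intro h; rw [h, norm_zero] at ht; norm_num at ht
    symm
    apply Submodule.eq_of_le_of_finrank_eq
    · rw [Submodule.span_le, Set.singleton_subset_iff]
      exact Submodule.smul_mem _ _ ht₀T
    · rw [finrank_span_singleton htne0, hT]
  obtain ⟨t, ht, hTt⟩ := hex
  -- basic setup
  have htne : t ≠ 0 := by intro h; rw [h, norm_zero] at ht; norm_num at ht
  have htT : t ∈ T := by rw [hTt]; exact Submodule.mem_span_singleton_self t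
  set p : EuclideanSpace ℂ (Fin n) := (Submodule.orthogonalProjection W t : EuclideanSpace ℂ (Fin n)) with hp
  set c : ℝ := ‖p‖ with hc
  have hpW : p ∈ W := (Submodule.orthogonalProjection W t).2
  have horth : t - p ∈ Wᗮ := Submodule.sub_starProjection_mem_orthogonal (K := W) t
  have htnW : t ∉ W := by
    intro hmem
    have : t ∈ W ⊓ T := ⟨hmem, htT⟩
    rw [hWT] at this
    exact htne this
  have hc0 : 0 ≤ c := norm_nonneg p
  have hip : ⟪t - p, p⟫_ℂ = 0 := by
    have := (Submodule.mem_orthogonal W _).1 horth p hpW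
    rw [← inner_conj_symm, this]; simp
  have hpyth : ‖t - p‖ ^ 2 + c ^ 2 = 1 := by
    have h2 := norm_add_sq_eq_norm_sq_add_norm_sq_of_inner_eq_zero (t - p) p hip
    rw [sub_add_cancel, ht] at h2
    rw [hc]; nlinarith [h2]
  have htp_pos : 0 < ‖t - p‖ := by
    rw [norm_pos_iff, sub_ne_zero]
    intro h; exact htnW (h ▸ hpW)
  have hc1 : c < 1 := by nlinarith
  set s : ℝ := Real.sqrt (1 - c ^ 2) with hs
  have hs_eq : s = ‖t - p‖ := by
    rw [hs, show (1 - c ^ 2) = ‖t - p‖ ^ 2 by nlinarith]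
    exact Real.sqrt_sq (norm_nonneg _)
  have hspos : 0 < s := hs_eq ▸ htp_pos
  -- lower bound for any W' meeting T
  have hlb : ∀ W' : Submodule ℂ (EuclideanSpace ℂ (Fin n)), W' ⊓ T ≠ ⊥ → s ≤ dp W W' := by
    intro W' hne
    have h1 : finrank ℂ (W' ⊓ T : Submodule ℂ (EuclideanSpace ℂ (Fin n))) = 1 := by
      have hle : finrank ℂ (W' ⊓ T : Submodule ℂ (EuclideanSpace ℂ (Fin n))) ≤ 1 := by
        rw [← hT]; exact Submodule.finrank_mono inf_le_right
      have hpos : finrank ℂ (W' ⊓ T : Submodule ℂ (EuclideanSpace ℂ (Fin n))) ≠ 0 := by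
        intro h0
        exact hne (Submodule.finrank_eq_zero.1 h0)
      omega
    have hTeq : W' ⊓ T = T := Submodule.eq_of_le_of_finrank_eq inf_le_right (by rw [h1, hT])
    have hTle : T ≤ W' := by rw [← hTeq]; exact inf_le_left
    have htW' : t ∈ W' := hTle htT
    have happ : (proj W - proj W') t = p - t := by
      simp only [ContinuousLinearMap.sub_apply, proj, ContinuousLinearMap.coe_comp',
        Function.comp_apply, Submodule.coe_subtypeL', Submodule.coe_subtype]
      rw [show (Submodule.orthogonalProjection W' t : EuclideanSpace ℂ (Fin n)) = t from
        Submodule.starProjection_eq_self_iff.2 htW']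
    have hnorm : ‖(proj W - proj W') t‖ = s := by
      rw [happ, ← neg_sub, norm_neg, hs_eq]
    calc s = ‖(proj W - proj W') t‖ := hnorm.symm
    _ ≤ ‖proj W - proj W'‖ * ‖t‖ := (proj W - proj W').le_opNorm t
    _ = dp W W' := by rw [ht, mul_one]; rfl
  have hWbot : W ≠ ⊥ := by
    intro h; rw [h, finrank_bot] at hW; omega
  -- choose a unit vector w ∈ W with p = c • w
  have hwex : ∃ w : EuclideanSpace ℂ (Fin n), w ∈ W ∧ ‖w‖ = 1 ∧ p = (c : ℂ) • w := by
    rcases eq_or_ne p 0 with hp0 | hp0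
    · obtain ⟨v, hvW, hvne⟩ := Submodule.exists_mem_ne_zero_of_ne_bot hWbot
      refine ⟨(‖v‖ : ℂ)⁻¹ • v, Submodule.smul_mem _ _ hvW, ?_, ?_⟩
      · rw [norm_smul, norm_inv, Complex.norm_real, Real.norm_eq_abs,
          abs_of_nonneg (norm_nonneg v), inv_mul_cancel₀ (norm_ne_zero_iff.2 hvne)]
      · have hczero : c = 0 := by rw [hc, hp0, norm_zero]
        rw [hp0, hczero]
        simp
    · have hcne : c ≠ 0 := by rwa [hc, norm_ne_zero_iff]
      refine ⟨(c : ℂ)⁻¹ • p, Submodule.smul_mem _ _ hpW, ?_, ?_⟩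
      · rw [norm_smul, norm_inv, Complex.norm_real, Real.norm_eq_abs,
          abs_of_nonneg hc0, ← hc, inv_mul_cancel₀ hcne]
      · rw [smul_smul, mul_inv_cancel₀ (by exact_mod_cast hcne), one_smul]
  obtain ⟨w, hwW, hw1, hpw⟩ := hwex
  have hwne : w ≠ 0 := by intro h; rw [h, norm_zero] at hw1; norm_num at hw1
  set U : Submodule ℂ (EuclideanSpace ℂ (Fin n)) := (ℂ ∙ w)ᗮ ⊓ W with hU
  have hwle : (ℂ ∙ w) ≤ W := by
    rw [Submodule.span_le, Set.singleton_subset_iff]; exact hwW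
  have hWeq : (ℂ ∙ w) ⊔ U = W := Submodule.sup_orthogonal_inf_of_hasOrthogonalProjection hwle
  have hUw : U ≤ (ℂ ∙ w)ᗮ := inf_le_left
  have hUW : U ≤ W := inf_le_right
  have htU : U ≤ (ℂ ∙ t)ᗮ := by
    intro u hu
    rw [Submodule.mem_orthogonal_singleton_iff_inner_right]
    have h1 : ⟪w, u⟫_ℂ = 0 :=
      Submodule.mem_orthogonal_singleton_iff_inner_right.1 (hUw hu)
    have h2 : ⟪t - p, u⟫_ℂ = 0 := by
      have h3 := (Submodule.mem_orthogonal W _).1 horth u (hUW hu)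
      rw [← inner_conj_symm, h3]; simp
    have h4 : ⟪t, u⟫_ℂ = ⟪p, u⟫_ℂ := by
      rw [inner_sub_left] at h2; exact sub_eq_zero.1 h2
    rw [h4, hpw, inner_smul_left, h1, mul_zero]
  set W' : Submodule ℂ (EuclideanSpace ℂ (Fin n)) := U ⊔ (ℂ ∙ t) with hW'
  have htW' : t ∈ W' := Submodule.mem_sup_right (Submodule.mem_span_singleton_self t)
  have hTleW' : T ≤ W' := by
    rw [hTt, Submodule.span_le, Set.singleton_subset_iff]; exact htW'
  have hW'T : W' ⊓ T ≠ ⊥ := by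
    intro h
    have hTbot : T = ⊥ := le_bot_iff.1 (h ▸ le_inf hTleW' le_rfl)
    rw [hTbot, finrank_bot] at hT; omega
  have hrkU : 1 + finrank ℂ U = k := by
    have h := Submodule.finrank_add_inf_finrank_orthogonal hwle
    rw [finrank_span_singleton hwne, hW] at h
    exact h
  have hUt_bot : U ⊓ (ℂ ∙ t) = ⊥ := by
    rw [eq_bot_iff]
    rintro x ⟨hxU, hxT⟩
    rcases Submodule.mem_span_singleton.1 hxT with ⟨d, rfl⟩
    rcases eq_or_ne d 0 with rfl | hd
    · simp
    · exfalso
      apply htnW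
      have hdw : d • t ∈ W := hUW hxU
      have := Submodule.smul_mem W d⁻¹ hdw
      rwa [smul_smul, inv_mul_cancel₀ hd, one_smul] at this
  have hrkW' : finrank ℂ W' = k := by
    have h := Submodule.finrank_sup_add_finrank_inf_eq U (ℂ ∙ t)
    rw [hUt_bot, finrank_bot, finrank_span_singleton htne, ← hW'] at h
    omega
  have hwt : ⟪w, t⟫_ℂ = (c : ℂ) := by
    have h2 : ⟪w, t - p⟫_ℂ = 0 := (Submodule.mem_orthogonal W _).1 horth w hwW
    have h3 : ⟪w, t⟫_ℂ = ⟪w, p⟫_ℂ := by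
      rw [inner_sub_right] at h2; exact sub_eq_zero.1 h2
    rw [h3, hpw, inner_smul_right, inner_self_eq_norm_sq_to_K, hw1]
    norm_num
  have happly : ∀ x, (proj W - proj W') x = ⟪w, x⟫_ℂ • w - ⟪t, x⟫_ℂ • t := by
    intro x
    simp only [ContinuousLinearMap.sub_apply, proj, ContinuousLinearMap.coe_comp',
      Function.comp_apply, Submodule.coe_subtypeL', Submodule.coe_subtype]
    rw [← hWeq, show (ℂ ∙ w) ⊔ U = U ⊔ (ℂ ∙ w) from sup_comm _ _,
      aux_proj_sup hw1 hUw x, hW', aux_proj_sup ht htU x]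
    abel
  have hdp_le : dp W W' ≤ s := by
    apply ContinuousLinearMap.opNorm_le_bound _ hspos.le
    intro x
    rw [happly x]
    exact aux_key_bound hw1 ht hc0 hc1 hwt x
  have hdp : dp W W' = s := le_antisymm hdp_le (hlb W' hW'T)
  have hminAngle : Real.sin (minAngle W T) = s := by
    rw [aux_minAngle ht hTt hWbot, ← hp, ← hc, Real.sin_arccos, ← hs]
  rw [hminAngle]
  constructor
  · exact ⟨W', hrkW', hW'T, hdp.symm⟩
  · rintro d ⟨W'', h1, h2, rfl⟩
    exact hlb W'' h2

end
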